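/- In the twisted deformative Schrödinger–Virasoro algebra 𝓛 with μ = 0 and λ = 1, the linear map D₁ defined by D₁(Yₙ) = Mₙ, D₁(Lₙ) = D₁(Mₙ) = 0 is an outer derivation of 𝓛. -/

import Mathlib

theorem stmt_14 (𝓛 : Type*) [LieRing 𝓛] [LieAlgebra ℂ 𝓛]
    (L Y M : ℤ → 𝓛)
    (hspan : Submodule.span ℂ (Set.range L ∪ Set.range Y ∪ Set.range M) = ⊤)
    (hind : LinearIndependent ℂ (fun p : ℤ × Fin 3 =>
      if p.2 = 0 then L p.1 else if p.2 = 1 then Y p.1 else M p.1))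
    (hLL : ∀ n m : ℤ, ⁅L n, L m⁆ = ((m : ℂ) - (n : ℂ)) • L (n + m))
    (hLY : ∀ n m : ℤ, ⁅L n, Y m⁆ = ((m : ℂ) - (n : ℂ)) • Y (n + m))
    (hYY : ∀ n m : ℤ, ⁅Y n, Y m⁆ = ((m : ℂ) - (n : ℂ)) • M (n + m))
    (hLM : ∀ n m : ℤ, ⁅L n, M m⁆ = ((m : ℂ) - (n : ℂ)) • M (n + m))
    (hYM : ∀ n m : ℤ, ⁅Y n, M m⁆ = 0)
    (hMM : ∀ n m : ℤ, ⁅M n, M m⁆ = 0)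
    (D : 𝓛 →ₗ[ℂ] 𝓛)
    (hDL : ∀ n : ℤ, D (L n) = 0)
    (hDY : ∀ n : ℤ, D (Y n) = M n)
    (hDM : ∀ n : ℤ, D (M n) = 0) :
    (∀ x y : 𝓛, D ⁅x, y⁆ = ⁅D x, y⁆ + ⁅x, D y⁆) ∧
      ¬ ∃ z : 𝓛, ∀ x : 𝓛, D x = ⁅z, x⁆ := by
  set S : Set 𝓛 := Set.range L ∪ Set.range Y ∪ Set.range M with hS
  have hmemS : ∀ x ∈ S, (∃ n, x = L n) ∨ (∃ n, x = Y n) ∨ (∃ n, x = M n) := by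
    intro x hx
    rcases hx with (⟨n, rfl⟩ | ⟨n, rfl⟩) | ⟨n, rfl⟩
    · exact Or.inl ⟨n, rfl⟩
    · exact Or.inr (Or.inl ⟨n, rfl⟩)
    · exact Or.inr (Or.inr ⟨n, rfl⟩)
  -- base case of derivation property
  have base : ∀ x ∈ S, ∀ y ∈ S, D ⁅x, y⁆ = ⁅D x, y⁆ + ⁅x, D y⁆ := by
    intro x hx y hy
    rcases hmemS x hx with ⟨n, rfl⟩ | ⟨n, rfl⟩ | ⟨n, rfl⟩ <;>
      rcases hmemS y hy with ⟨m, rfl⟩ | ⟨m, rfl⟩ | ⟨m, rfl⟩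
    · simp [hLL, hDL]
    · simp [hLY, hLM, hDL, hDY]
    · simp [hLM, hDL, hDM]
    · rw [← lie_skew (Y n) (L m), hLY, hDY, hDL, ← lie_skew (M n) (L m), hLM,
        map_neg, map_smul, hDY]
      simp
    · rw [hYY, hDY, hDY, map_smul, hDM, ← lie_skew (M n) (Y m), hYM, hYM]
      simp
    · simp [hYM, hDY, hDM, ← lie_skew (Y n) (M m), hMM]
    · rw [← lie_skew (M n) (L m), hLM, hDM, hDL, map_neg, map_smul, hDM]
      simp
    · rw [hDM, hDY, ← lie_skew (M n) (Y m), hYM]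
      simp [hMM]
    · simp [hMM, hDM]
  have deriv : ∀ x y : 𝓛, D ⁅x, y⁆ = ⁅D x, y⁆ + ⁅x, D y⁆ := by
    intro x y
    have hx : x ∈ Submodule.span ℂ S := hspan ▸ Submodule.mem_top
    have hy : y ∈ Submodule.span ℂ S := hspan ▸ Submodule.mem_top
    induction hx, hy using Submodule.span_induction₂ with
    | mem_mem a b ha hb => exact base a ha b hb
    | zero_left b hb => simp
    | zero_right a ha => simp
    | add_left a b c _ _ _ h1 h2 => simp [add_lie, map_add, h1, h2]; abel
    | add_right a b c _ _ _ h1 h2 => simp [lie_add, map_add, h1, h2]; abel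
    | smul_left r a b _ _ h => simp [smul_lie, map_smul, h, smul_add]
    | smul_right r a b _ _ h => simp [lie_smul, map_smul, h, smul_add]
  refine ⟨deriv, ?_⟩
  rintro ⟨z, hz⟩
  -- build basis
  set v : ℤ × Fin 3 → 𝓛 := fun p => if p.2 = 0 then L p.1 else if p.2 = 1 then Y p.1 else M p.1
    with hv
  have hsp : ⊤ ≤ Submodule.span ℂ (Set.range v) := by
    rw [← hspan]
    apply Submodule.span_le.mpr
    intro x hx
    rcases hmemS x hx with ⟨n, rfl⟩ | ⟨n, rfl⟩ | ⟨n, rfl⟩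
    · exact Submodule.subset_span ⟨(n, 0), rfl⟩
    · exact Submodule.subset_span ⟨(n, 1), rfl⟩
    · exact Submodule.subset_span ⟨(n, 2), rfl⟩
  let b : Module.Basis (ℤ × Fin 3) ℂ 𝓛 := Module.Basis.mk hind hsp
  have hb : ∀ p, b p = v p := fun p => Module.Basis.mk_apply hind hsp p
  set f : 𝓛 →ₗ[ℂ] ℂ := b.coord (0, 2) with hf
  have hfL : ∀ n, f (L n) = 0 := by
    intro n
    have : L n = b (n, 0) := by rw [hb]; simp [v]
    rw [this, hf, Module.Basis.coord_apply, Module.Basis.repr_self, Finsupp.single_apply]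
    simp
  have hfY : ∀ n, f (Y n) = 0 := by
    intro n
    have : Y n = b (n, 1) := by rw [hb]; simp [v]
    rw [this, hf, Module.Basis.coord_apply, Module.Basis.repr_self, Finsupp.single_apply]
    simp
  have hfM : ∀ n, f (M n) = if n = 0 then 1 else 0 := by
    intro n
    have : M n = b (n, 2) := by rw [hb]; simp [v]
    rw [this, hf, Module.Basis.coord_apply, Module.Basis.repr_self, Finsupp.single_apply]
    by_cases h : n = 0 <;> simp [h, Prod.ext_iff]
  -- key: f ⁅x, Y 0⁆ = 0 for all x
  have key : ∀ x : 𝓛, f ⁅x, Y 0⁆ = 0 := by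
    intro x
    have hx : x ∈ Submodule.span ℂ S := hspan ▸ Submodule.mem_top
    induction hx using Submodule.span_induction with
    | mem a ha =>
      rcases hmemS a ha with ⟨n, rfl⟩ | ⟨n, rfl⟩ | ⟨n, rfl⟩
      · rw [hLY n 0, map_smul, hfY]; simp
      · rw [hYY n 0, map_smul, hfM]
        by_cases h : n = 0 <;> simp [h]
      · rw [← lie_skew (M n) (Y 0), hYM]; simp
    | zero => simp
    | add a c _ _ h1 h2 => simp [add_lie, map_add, h1, h2]
    | smul r a _ h => simp [smul_lie, map_smul, h]
  have h1 : f (D (Y 0)) = 1 := by rw [hDY, hfM]; simp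
  rw [hz (Y 0), key z] at h1
  exact one_ne_zero h1.symm
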